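/- Let k ≥ 2 and r ≥ 2 be integers, let F_k be the free group on k generators, and for g ∈ F_k let |g| denote the length of the reduced word representing g. Let K = {g ∈ F_k : 1 ≤ |g| ≤ r} (the ball of radius r minus the identity), a finite set. Then there exists a function x : F_k → ℂ such that: (i) ∑_{s ∈ K} x(s·g) = 0 for every g ∈ F_k; (ii) x is bounded (there is M ∈ ℝ with |x(g)| ≤ M for all g); and (iii) the range of x is an infinite set (in particular x is nonzero and not periodic). Hence B_r \ {1} is b-arithmetic in F_k but not totally p-arithmetic. -/

import Mathlib

/- STATEMENT 13: For `k ≥ 2` and `r ≥ 2`, let `K = B_r \ {1} = {g ∈ F_k : 1 ≤ |g| ≤ r}`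
(where `|g|` is the reduced word length, `FreeGroup.norm`). Then the system `A(K)` has a
bounded solution `x : F_k → ℂ` whose range is infinite (so `x` is nonzero and not
periodic): `B_r \ {1}` is b-arithmetic but not totally p-arithmetic in `F_k`. -/

namespace Stmt13



variable {k : ℕ}

/-- inverse of a letter -/
def inv (a : Fin k × Bool) : Fin k × Bool := (a.1, !a.2)

/-- no-cancellation relation: `b` may follow `a` -/
def R (a b : Fin k × Bool) : Prop := ¬(a.1 = b.1 ∧ a.2 = !b.2)

instance : DecidableRel (R (k := k)) := fun _ _ => instDecidableNot

lemma inv_inv (a : Fin k × Bool) : inv (inv a) = a := by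
  simp [inv]

lemma not_R_iff {a b : Fin k × Bool} : ¬ R a b ↔ b = inv a := by
  simp only [R, not_not, inv]
  constructor
  · rintro ⟨h1, h2⟩
    cases a; cases b
    simp_all [Bool.eq_not_iff]
    tauto
  · rintro rfl
    simp

lemma reduce_eq_self {L : List (Fin k × Bool)} (h : List.IsChain R L) :
    FreeGroup.reduce L = L := by
  induction L with
  | nil => rfl
  | cons a L ih =>
    rcases L with _ | ⟨b, L'⟩
    · rfl
    · rw [List.isChain_cons_cons] at h
      rw [FreeGroup.reduce.cons, ih h.2]
      simp only []
      rw [if_neg h.1]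

lemma chain'_reduce (L : List (Fin k × Bool)) : List.IsChain R (FreeGroup.reduce L) := by
  induction L with
  | nil => simp
  | cons a L ih =>
    rw [FreeGroup.reduce.cons]
    rcases hL : FreeGroup.reduce L with _ | ⟨b, L'⟩
    · simp
    · rw [hL] at ih
      simp only []
      by_cases hc : a.1 = b.1 ∧ a.2 = !b.2
      · rw [if_pos hc]; exact ih.tail
      · rw [if_neg hc]; exact List.isChain_cons_cons.2 ⟨hc, ih⟩

/-- Finset of all lists of given length -/
def allW (k ℓ : ℕ) : Finset (List (Fin k × Bool)) :=
  (Finset.univ : Finset (Fin ℓ → Fin k × Bool)).image List.ofFn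

lemma mem_allW {ℓ : ℕ} {L : List (Fin k × Bool)} : L ∈ allW k ℓ ↔ L.length = ℓ := by
  simp only [allW, Finset.mem_image, Finset.mem_univ, true_and]
  constructor
  · rintro ⟨f, rfl⟩; simp
  · rintro rfl
    exact ⟨fun i => L.get i, List.ofFn_get L⟩

/-- Finset of reduced words of length ℓ -/
def W (k ℓ : ℕ) : Finset (List (Fin k × Bool)) :=
  (allW k ℓ).filter (fun L => List.IsChain R L)

lemma mem_W {ℓ : ℕ} {L : List (Fin k × Bool)} :
    L ∈ W k ℓ ↔ L.length = ℓ ∧ List.IsChain R L := by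
  simp [W, mem_allW]


lemma W_succ (ℓ : ℕ) :
    W k (ℓ+1) = Finset.univ.biUnion
      (fun a => ((W k ℓ).filter (fun L => ∀ b ∈ L.head?, R a b)).image (List.cons a)) := by
  ext L
  simp only [Finset.mem_biUnion, Finset.mem_univ, true_and, Finset.mem_image, Finset.mem_filter,
    mem_W]
  constructor
  · intro ⟨hlen, hch⟩
    rcases L with _ | ⟨a, L'⟩
    · simp at hlen
    · rw [List.isChain_cons] at hch
      exact ⟨a, L', ⟨⟨by simpa using hlen, hch.2⟩, hch.1⟩, rfl⟩
  · rintro ⟨a, L', ⟨⟨hlen, hch⟩, hd⟩, rfl⟩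
    exact ⟨by simp [hlen], List.isChain_cons.2 ⟨hd, hch⟩⟩

lemma sum_W_succ (f : List (Fin k × Bool) → ℂ) (ℓ : ℕ) :
    ∑ L ∈ W k (ℓ+1), f L
      = ∑ a : Fin k × Bool,
          ∑ L ∈ (W k ℓ).filter (fun L => ∀ b ∈ L.head?, R a b), f (a :: L) := by
  rw [W_succ, Finset.sum_biUnion]
  · refine Finset.sum_congr rfl fun a _ => ?_
    rw [Finset.sum_image]
    intro x _ y _ h
    simpa using h
  · intro a _ b _ hab
    simp only [Function.onFun, Finset.disjoint_left, Finset.mem_image]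
    rintro L ⟨x, _, rfl⟩ ⟨y, _, h⟩
    exact hab (by simpa using (List.cons.injEq _ _ _ _ ▸ h).1.symm ▸ rfl)

section Sums
variable (w : Fin k × Bool → ℂ)

def fw (L : List (Fin k × Bool)) : ℂ := (L.map w).prod

noncomputable def S (ℓ : ℕ) : ℂ := ∑ L ∈ W k ℓ, fw w L

noncomputable def T (ℓ : ℕ) (a : Fin k × Bool) : ℂ :=
  ∑ L ∈ (W k ℓ).filter (fun L => L.head? = some a), fw w L

lemma W_zero : W k 0 = {[]} := by
  ext L
  simp only [mem_W, List.length_eq_zero_iff, Finset.mem_singleton]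
  exact ⟨fun h => h.1, fun h => ⟨h, by subst h; simp⟩⟩

lemma S_zero : S w 0 = 1 := by simp [S, W_zero, fw]

lemma T_zero (a : Fin k × Bool) : T w 0 a = 0 := by
  simp [T, W_zero, Finset.filter_singleton]

lemma head_not_iff (a : Fin k × Bool) (L : List (Fin k × Bool)) :
    (¬ ∀ b ∈ L.head?, R a b) ↔ L.head? = some (inv a) := by
  rcases L with _ | ⟨b, L'⟩
  · simp
  · simp only [List.head?_cons, Option.mem_some_iff, Option.some.injEq]
    constructor
    · intro h
      have : ¬ R a b := by
        by_contra hR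
        exact h (fun c hc => hc ▸ hR)
      exact not_R_iff.1 this
    · intro h hall
      exact (not_R_iff.2 h) (hall b rfl)

lemma filter_head_split (ℓ : ℕ) (a : Fin k × Bool) :
    ∑ L ∈ (W k ℓ).filter (fun L => ∀ b ∈ L.head?, R a b), fw w L
      = S w ℓ - T w ℓ (inv a) := by
  have key := Finset.sum_filter_add_sum_filter_not (W k ℓ)
    (fun L => ∀ b ∈ L.head?, R a b) (fw w)
  have h2 : (W k ℓ).filter (fun L => ¬ ∀ b ∈ L.head?, R a b)
      = (W k ℓ).filter (fun L => L.head? = some (inv a)) := by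
    ext L
    simp only [Finset.mem_filter, and_congr_right_iff]
    intro _
    rw [head_not_iff]
  rw [h2] at key
  exact eq_sub_of_add_eq key

lemma T_succ (ℓ : ℕ) (a : Fin k × Bool) :
    T w (ℓ+1) a = w a * (S w ℓ - T w ℓ (inv a)) := by
  have key : (W k (ℓ+1)).filter (fun L => L.head? = some a)
      = ((W k ℓ).filter (fun L => ∀ b ∈ L.head?, R a b)).image (List.cons a) := by
    ext L
    simp only [Finset.mem_filter, Finset.mem_image, mem_W]
    constructor
    · rintro ⟨⟨hlen, hch⟩, hh⟩
      rcases L with _ | ⟨c, L'⟩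
      · simp at hh
      · have : c = a := by simpa using hh
        subst this
        rw [List.isChain_cons] at hch
        exact ⟨L', ⟨⟨by simpa using hlen, hch.2⟩, hch.1⟩, rfl⟩
    · rintro ⟨L', ⟨⟨hlen, hch⟩, hd⟩, rfl⟩
      exact ⟨⟨by simp [hlen], List.isChain_cons.2 ⟨hd, hch⟩⟩, rfl⟩
  rw [T, key, Finset.sum_image (by intro x _ y _ h; simpa using h)]
  have hf : ∀ L, fw w (a :: L) = w a * fw w L := by intro L; simp [fw]
  rw [Finset.sum_congr rfl (fun L _ => hf L), ← Finset.mul_sum, filter_head_split]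

lemma S_succ (ℓ : ℕ) :
    S w (ℓ+1) = ∑ a : Fin k × Bool, w a * (S w ℓ - T w ℓ (inv a)) := by
  rw [S, sum_W_succ]
  refine Finset.sum_congr rfl fun a _ => ?_
  have hf : ∀ L, fw w (a :: L) = w a * fw w L := by intro L; simp [fw]
  rw [Finset.sum_congr rfl (fun L _ => hf L), ← Finset.mul_sum, filter_head_split]

lemma S_eq_sum_T (ℓ : ℕ) :
    S w (ℓ+1) = ∑ a : Fin k × Bool, T w (ℓ+1) a := by
  rw [S_succ]
  exact Finset.sum_congr rfl fun a _ => (T_succ w ℓ a).symm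

end Sums

section Rec
variable (w : Fin k × Bool → ℂ) (hw : ∀ a, w a * w (inv a) = 1)

lemma card_letters : (Finset.univ : Finset (Fin k × Bool)).card = 2 * k := by
  simp [Finset.card_univ, mul_comm]

lemma S_one : S w 1 = ∑ a : Fin k × Bool, w a := by
  rw [S_succ]
  simp [S_zero, T_zero]

include hw in
lemma S_two : S w 2 = (∑ a : Fin k × Bool, w a)^2 - 2*k := by
  rw [S_succ]
  have : ∀ a : Fin k × Bool, w a * (S w 1 - T w 1 (inv a))
      = w a * S w 1 - w a * w (inv a) := by
    intro a
    rw [T_succ]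
    simp [S_zero, T_zero]
    ring
  rw [Finset.sum_congr rfl (fun a _ => this a)]
  rw [Finset.sum_sub_distrib]
  simp only [hw]
  rw [← Finset.sum_mul, S_one, Finset.sum_const, card_letters]
  push_cast
  ring

include hw in
lemma S_rec (m : ℕ) :
    S w (m+3) = (∑ a : Fin k × Bool, w a) * S w (m+2) - (2*k-1) * S w (m+1) := by
  rw [S_succ]
  have : ∀ a : Fin k × Bool, w a * (S w (m+2) - T w (m+2) (inv a))
      = w a * S w (m+2) - (S w (m+1) - T w (m+1) a) := by
    intro a
    rw [T_succ, inv_inv, mul_sub, ← mul_assoc, hw a, one_mul]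
  rw [Finset.sum_congr rfl (fun a _ => this a)]
  rw [Finset.sum_sub_distrib, Finset.sum_sub_distrib, ← Finset.sum_mul,
    ← S_eq_sum_T, Finset.sum_const, card_letters]
  push_cast
  ring

end Rec

/-- the universal radial polynomial sequence -/
noncomputable def Q (k : ℕ) (u : ℝ) : ℕ → ℝ
  | 0 => 1
  | 1 => u
  | 2 => u^2 - 2*k
  | (n+3) => u * Q k u (n+2) - (2*k-1) * Q k u (n+1)

lemma S_eq_Q (w : Fin k × Bool → ℂ) (hw : ∀ a, w a * w (inv a) = 1) (u : ℝ)
    (hu : ∑ a : Fin k × Bool, w a = (u:ℂ)) : ∀ n, S w n = ((Q k u n : ℝ) : ℂ)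
  | 0 => by rw [S_zero, Q]; simp
  | 1 => by rw [S_one, Q, hu]
  | 2 => by rw [S_two w hw, Q, hu]; push_cast; ring
  | (n+3) => by
    rw [S_rec w hw n, Q, hu, S_eq_Q w hw u hu (n+2), S_eq_Q w hw u hu (n+1)]
    push_cast
    ring

lemma Q_continuous (k : ℕ) : ∀ n, Continuous (fun u => Q k u n)
  | 0 => by simpa [Q] using continuous_const
  | 1 => by simpa [Q] using continuous_id'
  | 2 => by
    have : (fun u => Q k u 2) = fun u : ℝ => u^2 - 2*k := by funext u; rw [Q]
    rw [this]; fun_prop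
  | (n+3) => by
    have : (fun u => Q k u (n+3))
        = fun u => u * Q k u (n+2) - (2*(k:ℝ)-1) * Q k u (n+1) := by
      funext u; rw [Q]
    rw [this]
    exact ((continuous_id.mul (Q_continuous k (n+2)))).sub
      (continuous_const.mul (Q_continuous k (n+1)))

/-- ball sum polynomial -/
noncomputable def G (k r : ℕ) (u : ℝ) : ℝ := ∑ ℓ ∈ Finset.Icc 1 r, Q k u ℓ

lemma G_continuous (k r : ℕ) : Continuous (G k r) := by
  apply continuous_finset_sum
  intro ℓ _
  exact Q_continuous k ℓ


noncomputable def B (lam c : ℂ) : ℂ := (lam^2 - 1)/(lam*(lam - c))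

lemma Q_closed (k : ℕ) (lam c : ℂ) (hl : lam ≠ 0) (hc : c ≠ 0) (hne : lam ≠ c)
    (u : ℝ) (hu : (u:ℂ) = lam + c) (h2k : (2*(k:ℂ)) = lam*c + 1) :
    ∀ n : ℕ, ((Q k u (n+1) : ℝ) : ℂ) = B lam c * lam^(n+1) + B c lam * c^(n+1)
  | 0 => by
    rw [Q, hu, B, B]
    have hsub : lam - c ≠ 0 := sub_ne_zero.2 hne
    have hsub' : c - lam ≠ 0 := sub_ne_zero.2 (Ne.symm hne)
    field_simp
    ring
  | 1 => by
    rw [Q, B, B]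
    push_cast
    rw [hu, h2k]
    have hsub : lam - c ≠ 0 := sub_ne_zero.2 hne
    have hsub' : c - lam ≠ 0 := sub_ne_zero.2 (Ne.symm hne)
    field_simp
    ring
  | (n+2) => by
    rw [Q]
    push_cast
    rw [Q_closed k lam c hl hc hne u hu h2k (n+1), Q_closed k lam c hl hc hne u hu h2k n, hu]
    have h2k' : (2*(k:ℂ) - 1) = lam * c := by rw [h2k]; ring
    rw [h2k']
    ring

lemma G_closed (k r : ℕ) (hr : 1 ≤ r) (lam c : ℂ) (hl : lam ≠ 0) (hc : c ≠ 0)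
    (hne : lam ≠ c) (hl1 : lam ≠ 1) (hc1 : c ≠ 1)
    (u : ℝ) (hu : (u:ℂ) = lam + c) (h2k : (2*(k:ℂ)) = lam*c + 1)
    (wv : ℂ) (hlw : lam^(r+1) = wv) (hcw : c^(r+1) = wv) :
    ((G k r u : ℝ) : ℂ) = -(wv + lam*c)/(lam*c) := by
  have key : ∀ ℓ ∈ Finset.Icc 1 r, ((Q k u ℓ : ℝ) : ℂ) = B lam c * lam^ℓ + B c lam * c^ℓ := by
    intro ℓ hℓ
    have h1 : 1 ≤ ℓ := (Finset.mem_Icc.1 hℓ).1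
    obtain ⟨m, rfl⟩ := Nat.exists_eq_add_of_le h1
    rw [add_comm 1 m]
    exact Q_closed k lam c hl hc hne u hu h2k m
  rw [G]
  push_cast
  rw [Finset.sum_congr rfl key, Finset.sum_add_distrib, ← Finset.mul_sum, ← Finset.mul_sum]
  have hIcc : Finset.Icc 1 r = Finset.Ico 1 (r+1) := by
    rw [Finset.Ico_add_one_right_eq_Icc]
  have geoml : ∑ ℓ ∈ Finset.Icc 1 r, lam^ℓ = (wv - lam)/(lam - 1) := by
    rw [hIcc, geom_sum_Ico hl1 (by omega), hlw, pow_one]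
  have geomc : ∑ ℓ ∈ Finset.Icc 1 r, c^ℓ = (wv - c)/(c - 1) := by
    rw [hIcc, geom_sum_Ico hc1 (by omega), hcw, pow_one]
  rw [geoml, geomc, B, B]
  have h1 : lam - c ≠ 0 := sub_ne_zero.2 hne
  have h2 : c - lam ≠ 0 := sub_ne_zero.2 (Ne.symm hne)
  have h3 : lam - 1 ≠ 0 := sub_ne_zero.2 hl1
  have h4 : c - 1 ≠ 0 := sub_ne_zero.2 hc1
  field_simp
  ring


section Root
variable {k r : ℕ}

lemma G_at (hk : 2 ≤ k) (hr : 1 ≤ r) (ψ : ℝ) (h0 : 0 < ψ) (hπ : ψ < Real.pi) (ev : ℝ)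
    (h1 : Complex.exp (ψ*Complex.I)^(r+1) = (ev:ℂ))
    (h2 : Complex.exp (-ψ*Complex.I)^(r+1) = (ev:ℂ)) :
    G k r (2*Real.sqrt (2*k-1)*Real.cos ψ)
      = -(ev * Real.sqrt (2*k-1)^(r+1) + (2*k-1))/(2*k-1) := by
  set q : ℝ := Real.sqrt (2*k-1) with hq
  have h2k1 : (1:ℝ) < 2*(k:ℝ)-1 := by
    have : (2:ℝ) ≤ (k:ℝ) := by exact_mod_cast hk
    linarith
  have hq2 : q^2 = 2*(k:ℝ)-1 := Real.sq_sqrt (by linarith)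
  have hq1 : 1 < q := by
    have := Real.sqrt_lt_sqrt (zero_le_one) h2k1
    rwa [Real.sqrt_one] at this
  have hq0 : (0:ℝ) < q := by linarith
  set lam : ℂ := (q:ℂ) * Complex.exp (ψ*Complex.I) with hlam
  set c : ℂ := (q:ℂ) * Complex.exp (-ψ*Complex.I) with hc'
  have hqC : (q:ℂ) ≠ 0 := by exact_mod_cast hq0.ne'
  have hl : lam ≠ 0 := mul_ne_zero hqC (Complex.exp_ne_zero _)
  have hc : c ≠ 0 := mul_ne_zero hqC (Complex.exp_ne_zero _)
  have hlc : lam * c = ((2*(k:ℝ)-1 : ℝ) : ℂ) := by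
    rw [hlam, hc']
    rw [mul_mul_mul_comm, ← Complex.exp_add]
    have hψ : (↑ψ*Complex.I + -↑ψ*Complex.I) = 0 := by ring
    rw [hψ, Complex.exp_zero, mul_one, ← Complex.ofReal_mul]
    exact Complex.ofReal_inj.2 (by nlinarith [hq2])
  have h2k : (2*(k:ℂ)) = lam*c + 1 := by
    rw [hlc]; push_cast; ring
  have hsin : 0 < Real.sin ψ := Real.sin_pos_of_pos_of_lt_pi h0 hπ
  have him : lam.im = q * Real.sin ψ := by
    rw [hlam]
    simp [Complex.mul_im, Complex.exp_ofReal_mul_I_im, Complex.exp_ofReal_mul_I_re]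
  have hcim : c.im = -(q * Real.sin ψ) := by
    rw [hc', Complex.mul_im]
    simp only [Complex.ofReal_re, Complex.ofReal_im, zero_mul, add_zero]
    rw [show ((-↑ψ : ℂ) * Complex.I) = ((-ψ:ℝ):ℂ)*Complex.I by push_cast; ring]
    rw [Complex.exp_ofReal_mul_I_im, Real.sin_neg]
    ring
  have hne : lam ≠ c := by
    intro h
    rw [Complex.ext_iff] at h
    rw [him, hcim] at h
    nlinarith [h.2]
  have hl1 : lam ≠ 1 := by
    intro h
    have : lam.im = 0 := by rw [h]; simp
    rw [him] at this
    nlinarith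
  have hc1 : c ≠ 1 := by
    intro h
    have : c.im = 0 := by rw [h]; simp
    rw [hcim] at this
    nlinarith
  have hu : ((2*q*Real.cos ψ : ℝ):ℂ) = lam + c := by
    rw [hlam, hc', ← mul_add]
    push_cast [Complex.exp_mul_I]
    rw [Complex.cos_neg, Complex.sin_neg]
    ring
  have hwv : lam^(r+1) = ((ev * q^(r+1) : ℝ) : ℂ) := by
    rw [hlam, mul_pow, h1]
    push_cast
    ring
  have hcw : c^(r+1) = ((ev * q^(r+1) : ℝ) : ℂ) := by
    rw [hc', mul_pow, h2]
    push_cast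
    ring
  have := G_closed k r hr lam c hl hc hne hl1 hc1 (2*q*Real.cos ψ) hu h2k
    ((ev * q^(r+1) : ℝ) : ℂ) hwv hcw
  rw [hlc] at this
  have h2k0 : ((2*(k:ℝ)-1 : ℝ) : ℂ) ≠ 0 := by
    exact_mod_cast (by linarith : (2*(k:ℝ)-1) ≠ 0)
  apply Complex.ofReal_injective
  rw [this]
  push_cast
  ring

end Root

section Root2
variable {k r : ℕ}

lemma exists_u0 (hk : 2 ≤ k) (hr : 2 ≤ r) :
    ∃ u0 : ℝ, G k r u0 = 0 ∧ |u0| ≤ 2*Real.sqrt (2*k-1) := by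
  have hπ := Real.pi_pos
  have hr1 : (0:ℝ) < (r:ℝ) + 1 := by positivity
  set ψ1 : ℝ := Real.pi/((r:ℝ)+1) with hψ1
  set ψ2 : ℝ := 2*Real.pi/((r:ℝ)+1) with hψ2
  have h01 : 0 < ψ1 := by positivity
  have h02 : 0 < ψ2 := by positivity
  have h12 : ψ1 < ψ2 := by
    rw [hψ1, hψ2, div_lt_div_iff₀ hr1 hr1]
    nlinarith
  have h2π : ψ2 < Real.pi := by
    rw [hψ2, div_lt_iff₀ hr1]
    have : (2:ℝ) < (r:ℝ)+1 := by
      have : (2:ℝ) ≤ (r:ℝ) := by exact_mod_cast hr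
      linarith
    nlinarith
  have h1π : ψ1 < Real.pi := lt_trans h12 h2π
  have hmul1 : ((r:ℝ)+1) * ψ1 = Real.pi := by
    rw [hψ1]; field_simp
  have hmul2 : ((r:ℝ)+1) * ψ2 = 2*Real.pi := by
    rw [hψ2]; field_simp
  -- exp identities
  have key1 : Complex.exp (↑ψ1*Complex.I)^(r+1) = (((-1):ℝ):ℂ) := by
    rw [← Complex.exp_nat_mul]
    have : ((r+1 : ℕ):ℂ) * (↑ψ1 * Complex.I) = ↑Real.pi * Complex.I := by
      have := congrArg Complex.ofReal hmul1
      push_cast at this ⊢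
      linear_combination Complex.I * this
    rw [this, Complex.exp_pi_mul_I]
    norm_num
  have key1' : Complex.exp (-↑ψ1*Complex.I)^(r+1) = (((-1):ℝ):ℂ) := by
    rw [← Complex.exp_nat_mul]
    have : ((r+1 : ℕ):ℂ) * (-↑ψ1 * Complex.I) = -(↑Real.pi * Complex.I) := by
      have := congrArg Complex.ofReal hmul1
      push_cast at this ⊢
      linear_combination -Complex.I * this
    rw [this, Complex.exp_neg, Complex.exp_pi_mul_I]
    norm_num
  have key2 : Complex.exp (↑ψ2*Complex.I)^(r+1) = (((1):ℝ):ℂ) := by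
    rw [← Complex.exp_nat_mul]
    have : ((r+1 : ℕ):ℂ) * (↑ψ2 * Complex.I) = 2*↑Real.pi * Complex.I := by
      have := congrArg Complex.ofReal hmul2
      push_cast at this ⊢
      linear_combination Complex.I * this
    rw [this, Complex.exp_two_pi_mul_I]
    norm_num
  have key2' : Complex.exp (-↑ψ2*Complex.I)^(r+1) = (((1):ℝ):ℂ) := by
    rw [← Complex.exp_nat_mul]
    have : ((r+1 : ℕ):ℂ) * (-↑ψ2 * Complex.I) = -(2*↑Real.pi * Complex.I) := by
      have := congrArg Complex.ofReal hmul2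
      push_cast at this ⊢
      linear_combination -Complex.I * this
    rw [this, Complex.exp_neg, Complex.exp_two_pi_mul_I]
    norm_num
  set q : ℝ := Real.sqrt (2*k-1) with hq
  have h2k1 : (1:ℝ) < 2*(k:ℝ)-1 := by
    have : (2:ℝ) ≤ (k:ℝ) := by exact_mod_cast hk
    linarith
  have hq2 : q^2 = 2*(k:ℝ)-1 := Real.sq_sqrt (by linarith)
  have hq1 : 1 < q := by
    have := Real.sqrt_lt_sqrt (zero_le_one) h2k1
    rwa [Real.sqrt_one] at this
  have hq0 : (0:ℝ) < q := by linarith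
  have hb := G_at hk (by omega) ψ1 h01 h1π (-1) key1 key1'
  have ha := G_at hk (by omega) ψ2 h02 h2π 1 key2 key2'
  have hqpow : q^2 < q^(r+1) := by
    apply pow_lt_pow_right₀ hq1 (by omega)
  have hGb : 0 < G k r (2*q*Real.cos ψ1) := by
    rw [hb]
    rw [neg_div, neg_pos, div_neg_iff]
    right
    constructor
    · nlinarith
    · linarith
  have hGa : G k r (2*q*Real.cos ψ2) < 0 := by
    rw [ha, neg_div, neg_lt_zero, div_pos_iff]
    left
    constructor
    · nlinarith [pow_pos hq0 (r+1)]
    · linarith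
  have hab : 2*q*Real.cos ψ2 < 2*q*Real.cos ψ1 := by
    have := Real.cos_lt_cos_of_nonneg_of_le_pi (le_of_lt h01) (le_of_lt h2π) h12
    nlinarith
  have hIVT := intermediate_value_Icc (le_of_lt hab) (G_continuous k r).continuousOn
  have h0mem : (0:ℝ) ∈ Set.Icc (G k r (2*q*Real.cos ψ2)) (G k r (2*q*Real.cos ψ1)) :=
    ⟨le_of_lt hGa, le_of_lt hGb⟩
  obtain ⟨u0, hu0mem, hGu0⟩ := hIVT h0mem
  refine ⟨u0, hGu0, abs_le.2 ⟨?_, ?_⟩⟩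
  · have h1 := hu0mem.1
    have hcos := Real.neg_one_le_cos ψ2
    have hnn : (0:ℝ) ≤ 2*q*(Real.cos ψ2 + 1) := mul_nonneg (by linarith) (by linarith)
    have hexp : 2*q*(Real.cos ψ2 + 1) = 2*q*Real.cos ψ2 + 2*q := by ring
    linarith
  · have h1 := hu0mem.2
    have hcos := Real.cos_le_one ψ1
    have hnn : (0:ℝ) ≤ 2*q*(1 - Real.cos ψ1) := mul_nonneg (by linarith) (by linarith)
    have hexp : 2*q*(1 - Real.cos ψ1) = 2*q - 2*q*Real.cos ψ1 := by ring
    linarith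

end Root2

lemma exists_theta (k : ℕ) (hk : 2 ≤ k) (u0 : ℝ) (hu0 : |u0| ≤ 2*Real.sqrt (2*k-1)) :
    ∃ θ : Fin k → ℝ, (∑ i : Fin k, 2*Real.cos (θ i)) = u0 ∧
      (∀ n : ℕ, 0 < n → Complex.exp ((θ ⟨0, by omega⟩ : ℝ) * Complex.I)^n ≠ 1) := by
  have hkR : (2:ℝ) ≤ (k:ℝ) := by exact_mod_cast hk
  have hqk : Real.sqrt (2*k-1) < k := by
    have h1 : (2*(k:ℝ)-1) < (k:ℝ)^2 := by nlinarith
    have := Real.sqrt_lt_sqrt (by linarith) h1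
    rwa [Real.sqrt_sq (by linarith)] at this
  have hu0' : |u0| < 2*k := lt_of_le_of_lt hu0 (by linarith)
  have hu0a : -(2*(k:ℝ)) < u0 := by cases abs_lt.1 hu0' ; linarith
  have hu0b : u0 < 2*(k:ℝ) := (abs_lt.1 hu0').2
  set m : ℝ := max (-1) ((u0 - 2*((k:ℝ)-1))/2) with hm
  set M : ℝ := min 1 ((u0 + 2*((k:ℝ)-1))/2) with hM
  have hmM : m < M := by
    rw [hm, hM]
    apply max_lt <;> apply lt_min
    · norm_num
    · linarith
    · linarith
    · linarith
  have hm1 : -1 ≤ m := le_max_left _ _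
  have hM1 : M ≤ 1 := min_le_left _ _
  have harc : Real.arccos M < Real.arccos m := by
    exact Real.strictAntiOn_arccos ⟨hm1, le_trans hmM.le hM1⟩ ⟨le_trans hm1 hmM.le, hM1⟩ hmM
  -- choose θ0 in the interval avoiding the countable bad set
  set Bad : Set ℝ := Set.range (fun p : ℤ × ℕ => 2*Real.pi*p.1/(p.2+1)) with hBad
  have hBadc : Bad.Countable := Set.countable_range _
  have hne : (Set.Ioo (Real.arccos M) (Real.arccos m) \ Bad).Nonempty := by
    by_contra h
    rw [Set.not_nonempty_iff_eq_empty, Set.diff_eq_empty] at h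
    have h0 := hBadc.measure_zero MeasureTheory.volume
    have h1 := MeasureTheory.measure_mono (μ := MeasureTheory.volume) h
    rw [h0, Real.volume_Ioo, nonpos_iff_eq_zero, ENNReal.ofReal_eq_zero] at h1
    linarith
  obtain ⟨θ0, hθ0I, hθ0B⟩ := hne
  have hθ00 : 0 ≤ θ0 := le_trans (Real.arccos_nonneg M) (le_of_lt hθ0I.1)
  have hθ0π : θ0 ≤ Real.pi := le_trans (le_of_lt hθ0I.2) (Real.arccos_le_pi m)
  have hcos1 : Real.cos θ0 < M := by
    have := Real.cos_lt_cos_of_nonneg_of_le_pi (Real.arccos_nonneg M) hθ0π hθ0I.1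
    rwa [Real.cos_arccos (by linarith) hM1] at this
  have hcos2 : m < Real.cos θ0 := by
    have := Real.cos_lt_cos_of_nonneg_of_le_pi hθ00 (Real.arccos_le_pi m) hθ0I.2
    rwa [Real.cos_arccos hm1 (by linarith)] at this
  set v : ℝ := u0 - 2*Real.cos θ0 with hv
  have hk1 : (1:ℝ) ≤ (k:ℝ) - 1 := by linarith
  have hvb : |v| ≤ 2*((k:ℝ)-1) := by
    rw [abs_le, hv]
    constructor
    · have : Real.cos θ0 < M := hcos1
      have : M ≤ (u0 + 2*((k:ℝ)-1))/2 := min_le_right _ _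
      nlinarith [hcos1]
    · have : (u0 - 2*((k:ℝ)-1))/2 ≤ m := le_max_right _ _
      nlinarith [hcos2]
  set t : ℝ := v/(2*((k:ℝ)-1)) with ht
  have htb : -1 ≤ t ∧ t ≤ 1 := by
    rw [ht]
    rw [abs_le] at hvb
    constructor
    · rw [le_div_iff₀ (by linarith)]
      linarith
    · rw [div_le_iff₀ (by linarith)]
      linarith
  refine ⟨fun i => if i = ⟨0, by omega⟩ then θ0 else Real.arccos t, ?_, ?_⟩
  · rw [Fintype.sum_eq_add_sum_compl ⟨0, by omega⟩]
    simp only [if_pos rfl, if_true]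
    have hcompl : ∀ i ∈ ({(⟨0, by omega⟩ : Fin k)}ᶜ : Finset (Fin k)),
        2*Real.cos (if i = ⟨0, by omega⟩ then θ0 else Real.arccos t) = 2*t := by
      intro i hi
      rw [Finset.mem_compl, Finset.mem_singleton] at hi
      rw [if_neg hi, Real.cos_arccos htb.1 htb.2]
    rw [Finset.sum_congr rfl hcompl, Finset.sum_const, Finset.card_compl,
      Finset.card_singleton, Fintype.card_fin]
    have : ((k - 1 : ℕ) : ℝ) = (k:ℝ) - 1 := by
      have : 1 ≤ k := by omega
      push_cast [this]
      ring
    rw [nsmul_eq_mul, this, ht]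
    field_simp
    ring
  · intro n hn hexp
    simp only [if_pos rfl] at hexp
    rw [← Complex.exp_nat_mul, Complex.exp_eq_one_iff] at hexp
    obtain ⟨j, hj⟩ := hexp
    apply hθ0B
    rw [hBad]
    refine ⟨(j, n-1), ?_⟩
    simp only
    have hnn : ((n - 1 : ℕ) : ℝ) + 1 = (n : ℝ) := by
      have : 1 ≤ n := hn
      push_cast [this]
      ring
    rw [hnn]
    -- from hj : ↑n * (↑θ0 * I) = ↑j * (2 * ↑π * I)
    have : (n:ℝ) * θ0 = j * (2*Real.pi) := by
      have h2 := congrArg Complex.im hj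
      push_cast at h2
      simpa using h2
    have hnR : (0:ℝ) < (n:ℝ) := by exact_mod_cast hn
    field_simp
    linarith [this]


section Group
open FreeGroup

lemma norm_mk_of_W {ℓ : ℕ} {L : List (Fin k × Bool)} (hL : L ∈ W k ℓ) :
    FreeGroup.norm (FreeGroup.mk L) = ℓ := by
  rw [FreeGroup.norm, FreeGroup.toWord_mk, reduce_eq_self (mem_W.1 hL).2, (mem_W.1 hL).1]

noncomputable def KF (k r : ℕ) : Finset (FreeGroup (Fin k)) :=
  letI := Classical.decEq (FreeGroup (Fin k))
  (Finset.Icc 1 r).biUnion (fun ℓ => (W k ℓ).image FreeGroup.mk)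

lemma mem_KF {r : ℕ} {g : FreeGroup (Fin k)} :
    g ∈ KF k r ↔ 1 ≤ FreeGroup.norm g ∧ FreeGroup.norm g ≤ r := by
  letI := Classical.decEq (FreeGroup (Fin k))
  rw [KF]
  simp only [Finset.mem_biUnion, Finset.mem_Icc, Finset.mem_image]
  constructor
  · rintro ⟨ℓ, ⟨h1, h2⟩, L, hL, rfl⟩
    rw [norm_mk_of_W hL]
    exact ⟨h1, h2⟩
  · rintro ⟨h1, h2⟩
    refine ⟨FreeGroup.norm g, ⟨h1, h2⟩, g.toWord, ?_, FreeGroup.mk_toWord⟩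
    rw [mem_W]
    refine ⟨rfl, ?_⟩
    have := chain'_reduce g.toWord
    rwa [FreeGroup.reduce_toWord] at this

lemma sum_KF (r : ℕ) (F : FreeGroup (Fin k) → ℂ) :
    ∑ s ∈ KF k r, F s = ∑ ℓ ∈ Finset.Icc 1 r, ∑ L ∈ W k ℓ, F (FreeGroup.mk L) := by
  letI := Classical.decEq (FreeGroup (Fin k))
  rw [KF, Finset.sum_biUnion]
  · refine Finset.sum_congr rfl fun ℓ _ => ?_
    rw [Finset.sum_image]
    intro L1 h1 L2 h2 h
    have := congrArg FreeGroup.toWord h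
    rwa [FreeGroup.toWord_mk, FreeGroup.toWord_mk, reduce_eq_self (mem_W.1 h1).2,
      reduce_eq_self (mem_W.1 h2).2] at this
  · intro ℓ1 _ ℓ2 _ hne
    simp only [Function.onFun, Finset.disjoint_left, Finset.mem_image]
    rintro g ⟨L1, hL1, rfl⟩ ⟨L2, hL2, h⟩
    apply hne
    rw [← norm_mk_of_W hL1, ← norm_mk_of_W hL2, h]

end Group

end Stmt13

open Stmt13 in
theorem stmt_13 (k r : ℕ) (hk : 2 ≤ k) (hr : 2 ≤ r) :
    ∃ x : FreeGroup (Fin k) → ℂ,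
      (∀ g : FreeGroup (Fin k),
        ∑ᶠ s ∈ {h : FreeGroup (Fin k) | 1 ≤ FreeGroup.norm h ∧ FreeGroup.norm h ≤ r},
          x (s * g) = 0) ∧
      (∃ M : ℝ, ∀ g : FreeGroup (Fin k), ‖x g‖ ≤ M) ∧
      (Set.range x).Infinite := by
  obtain ⟨u0, hG0, hu0b⟩ := exists_u0 hk hr
  obtain ⟨θ, hθsum, hθirr⟩ := exists_theta k hk u0 hu0b
  set z : Fin k → Circle := fun i => Circle.exp (θ i) with hz
  set φ : FreeGroup (Fin k) →* Circle := FreeGroup.lift z with hφ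
  set x : FreeGroup (Fin k) → ℂ := fun g => ((φ g : Circle) : ℂ) with hx
  set w : Fin k × Bool → ℂ :=
    fun a => ((bif a.2 then z a.1 else (z a.1)⁻¹ : Circle) : ℂ) with hwdef
  have hcoe_ne : ∀ t : Circle, (t : ℂ) ≠ 0 := fun t h => by
    have := Circle.norm_coe t
    rw [h] at this
    simp at this
  have hw : ∀ a, w a * w (inv a) = 1 := by
    rintro ⟨i, b⟩
    cases b <;>
      simp [hwdef, inv, Circle.coe_inv, mul_inv_cancel₀ (hcoe_ne (z i)),
        inv_mul_cancel₀ (hcoe_ne (z i))]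
  have hu : ∑ a : Fin k × Bool, w a = ((u0:ℝ):ℂ) := by
    rw [Fintype.sum_prod_type]
    have hterm : ∀ i : Fin k, (∑ b : Bool, w (i, b)) = ((2*Real.cos (θ i) : ℝ) : ℂ) := by
      intro i
      rw [Fintype.sum_bool]
      simp only [hwdef, cond_true, cond_false]
      rw [Circle.coe_inv, hz]
      simp only [Circle.coe_exp]
      rw [← Complex.exp_neg]
      rw [show -(↑(θ i) * Complex.I) = ((-(θ i):ℝ):ℂ)*Complex.I by push_cast; ring]
      rw [Complex.exp_mul_I, Complex.exp_mul_I]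
      push_cast
      rw [Complex.cos_neg, Complex.sin_neg]
      ring
    rw [Finset.sum_congr rfl (fun i _ => hterm i)]
    rw [← hθsum]
    push_cast
    ring
  have hx_mk : ∀ L : List (Fin k × Bool), x (FreeGroup.mk L) = fw w L := by
    intro L
    rw [hx]
    simp only
    rw [hφ, FreeGroup.lift_mk]
    rw [show ((((List.map (fun a => bif a.2 then z a.1 else (z a.1)⁻¹) L).prod : Circle)) : ℂ)
        = ((Circle.coeHom) (List.map (fun a => bif a.2 then z a.1 else (z a.1)⁻¹) L).prod) from rfl]
    rw [MonoidHom.map_list_prod, List.map_map, fw]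
    congr 1
  have hsum0 : ∑ s ∈ KF k r, x s = 0 := by
    rw [sum_KF]
    have : ∀ ℓ ∈ Finset.Icc 1 r, ∑ L ∈ W k ℓ, x (FreeGroup.mk L) = ((Q k u0 ℓ : ℝ) : ℂ) := by
      intro ℓ _
      rw [Finset.sum_congr rfl (fun L _ => hx_mk L)]
      exact S_eq_Q w hw u0 hu ℓ
    rw [Finset.sum_congr rfl this]
    rw [← Complex.ofReal_sum]
    rw [show ∑ ℓ ∈ Finset.Icc 1 r, Q k u0 ℓ = G k r u0 from rfl, hG0]
    simp
  refine ⟨x, ?_, ⟨1, ?_⟩, ?_⟩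
  · intro g
    have hKset : {h : FreeGroup (Fin k) | 1 ≤ FreeGroup.norm h ∧ FreeGroup.norm h ≤ r}
        = ↑(KF k r) := by
      ext h
      simp [mem_KF]
    rw [hKset, finsum_mem_coe_finset]
    have hmul : ∀ s, x (s * g) = x s * x g := by
      intro s
      rw [hx]
      simp only
      rw [map_mul, Circle.coe_mul]
    rw [Finset.sum_congr rfl (fun s _ => hmul s), ← Finset.sum_mul, hsum0, zero_mul]
  · intro g
    rw [hx]
    simp only
    rw [Circle.norm_coe]
  · set i0 : Fin k := ⟨0, by omega⟩ with hi0
    have hxpow : ∀ n : ℕ, x (FreeGroup.of i0 ^ n) = Complex.exp ((θ i0 : ℝ) * Complex.I)^n := by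
      intro n
      rw [hx]
      simp only
      rw [map_pow]
      rw [show ((((φ (FreeGroup.of i0))^n : Circle)) : ℂ) = ((φ (FreeGroup.of i0) : ℂ))^n by
        norm_cast]
      rw [hφ, FreeGroup.lift_apply_of, hz]
      simp [Circle.coe_exp]
    have hstep : ∀ a b : ℕ, a < b →
        Complex.exp ((θ i0 : ℝ) * Complex.I)^a ≠ Complex.exp ((θ i0 : ℝ) * Complex.I)^b := by
      intro a b hab h
      have hne : Complex.exp ((θ i0 : ℝ) * Complex.I) ≠ 0 := Complex.exp_ne_zero _
      have hb : b = a + (b - a) := by omega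
      rw [hb, pow_add] at h
      have h1 : Complex.exp ((θ i0 : ℝ) * Complex.I)^(b-a) = 1 := by
        have := mul_left_cancel₀ (pow_ne_zero a hne) (by rw [← h, mul_one] :
          Complex.exp ((θ i0 : ℝ) * Complex.I)^a * 1
            = Complex.exp ((θ i0 : ℝ) * Complex.I)^a * Complex.exp ((θ i0:ℝ)*Complex.I)^(b-a))
        exact this.symm
      exact hθirr (b - a) (by omega) h1
    apply Set.infinite_of_injective_forall_mem
      (f := fun n : ℕ => Complex.exp ((θ i0 : ℝ) * Complex.I)^n)
    · intro a b hab
      by_contra hne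
      rcases lt_trichotomy a b with h | h | h
      · exact hstep a b h hab
      · exact hne h
      · exact hstep b a h hab.symm
    · intro n
      exact ⟨FreeGroup.of i0 ^ n, (hxpow n)⟩
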